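/- Let K be a finite-dimensional abstract simplicial complex with a compatible partial order on its vertices, and let X = {∑_{u} t_u u ∈ CC(K) : t_v ≥ t_w whenever v ≤ w in V(K)} be the subset of the cubical cone corresponding to down-closed configurations. For each pair v < w of vertices, the map ψ_{vw} replacing (t_v, t_w) by (max{t_v, (t_v+t_w)/2}, min{t_w, (t_v+t_w)/2}) and fixing other coordinates maps CC(K) into CC(K), is the nearest-point projection of the ambient Euclidean space onto the half-space {t_v ≥ t_w}, and restricts to a non-expanding retraction of CC(K) onto CC(K) ∩ {t_v ≥ t_w}. -/

import Mathlib

set_option linter.unusedSectionVars false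
set_option maxHeartbeats 1000000

/-- An abstract simplicial complex on a vertex type `V`: a family of finite subsets of `V`
closed under taking subsets. -/
structure ASC (V : Type*) where
  faces : Set (Finset V)
  down_closed : ∀ ⦃σ τ : Finset V⦄, σ ∈ faces → τ ⊆ σ → τ ∈ faces

/-- The cubical cone `CC(K) = ∪_{σ ∈ K} I^σ` inside the free real vector space on `V`. -/
def CC {V : Type*} (K : ASC V) : Set (V →₀ ℝ) :=
  {f | ∃ σ ∈ K.faces, f.support ⊆ σ ∧ ∀ v : V, 0 ≤ f v ∧ f v ≤ 1}

/-- Squared Euclidean distance on the free real vector space on `V`. -/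
noncomputable def dsq {V : Type*} (f g : V →₀ ℝ) : ℝ :=
  (f - g).sum fun _ c => c ^ 2

/-- Euclidean distance on the free real vector space on `V`. -/
noncomputable def eudist {V : Type*} (f g : V →₀ ℝ) : ℝ :=
  Real.sqrt (dsq f g)

/-- The intrinsic (length) pseudo-metric of the cubical cone: the infimum of lengths of
strings, i.e. finite sequences of points of `CC(K)` in which any two consecutive points lie
in a common cube `I^σ`. -/
noncomputable def intrDist {V : Type*} (K : ASC V) (x y : V →₀ ℝ) : ℝ :=
  sInf {L | ∃ p : List (V →₀ ℝ), p ≠ [] ∧ p.head? = some x ∧ p.getLast? = some y ∧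
    (∀ f ∈ p, f ∈ CC K) ∧
    List.Chain' (fun f g => ∃ σ ∈ K.faces, f.support ⊆ σ ∧ g.support ⊆ σ ∧
      (∀ v : V, 0 ≤ f v ∧ f v ≤ 1) ∧ (∀ v : V, 0 ≤ g v ∧ g v ≤ 1)) p ∧
    L = ((p.zip p.tail).map fun q => eudist q.1 q.2).sum}

/-- The closed half-space `{t_w ≤ t_v}`. -/
def halfSpace {V : Type*} (v w : V) : Set (V →₀ ℝ) := {f | f w ≤ f v}

/-- The map `ψ_{vw}` replacing the coordinates `(t_v, t_w)` by
`(max {t_v, (t_v+t_w)/2}, min {t_w, (t_v+t_w)/2})` and fixing all other coordinates. -/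
noncomputable def psi {V : Type*} [DecidableEq V] (v w : V) (f : V →₀ ℝ) : V →₀ ℝ :=
  (f.update v (max (f v) ((f v + f w) / 2))).update w (min (f w) ((f v + f w) / 2))

section Aux
variable {V : Type*} [DecidableEq V]

lemma psi_apply_w (v w : V) (f : V →₀ ℝ) :
    psi v w f w = min (f w) ((f v + f w) / 2) := by
  simp [psi, Finsupp.update]

lemma psi_apply_v {v w : V} (hvw : v ≠ w) (f : V →₀ ℝ) :
    psi v w f v = max (f v) ((f v + f w) / 2) := by
  simp [psi, Finsupp.update, Function.update_apply, hvw, Ne.symm hvw]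

lemma psi_apply_ne {v w u : V} (huv : u ≠ v) (huw : u ≠ w) (f : V →₀ ℝ) :
    psi v w f u = f u := by
  simp [psi, Finsupp.update, Function.update_apply, huv, huw]

lemma dsq_eq_sum (f g : V →₀ ℝ) (s : Finset V) (hs : (f - g).support ⊆ s) :
    dsq f g = ∑ u ∈ s, (f u - g u) ^ 2 := by
  rw [dsq, Finsupp.sum, Finset.sum_subset hs (fun u _ hu => by
    rw [Finsupp.notMem_support_iff.mp hu]; ring)]
  exact Finset.sum_congr rfl fun u _ => by rw [Finsupp.sub_apply]

lemma dsq_eq (f g : V →₀ ℝ) {v w : V} (hvw : v ≠ w) {s' : Finset V}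
    (hv : v ∉ s') (hw : w ∉ s')
    (hsupp : (f - g).support ⊆ insert v (insert w s')) :
    dsq f g = (f v - g v) ^ 2 + (f w - g w) ^ 2 + ∑ u ∈ s', (f u - g u) ^ 2 := by
  rw [dsq_eq_sum f g _ hsupp, Finset.sum_insert (by simp [hvw, hv]),
    Finset.sum_insert hw]; ring

lemma key2 (a b c d : ℝ) :
    (max a ((a + b) / 2) - max c ((c + d) / 2)) ^ 2 +
      (min b ((a + b) / 2) - min d ((c + d) / 2)) ^ 2 ≤ (a - c) ^ 2 + (b - d) ^ 2 := by
  rcases le_total b a with h1 | h1 <;> rcases le_total d c with h2 | h2 <;>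
    [rw [max_eq_left (by linarith), min_eq_left (by linarith),
        max_eq_left (by linarith), min_eq_left (by linarith)];
     rw [max_eq_left (by linarith), min_eq_left (by linarith),
        max_eq_right (by linarith), min_eq_right (by linarith)];
     rw [max_eq_right (by linarith), min_eq_right (by linarith),
        max_eq_left (by linarith), min_eq_left (by linarith)];
     rw [max_eq_right (by linarith), min_eq_right (by linarith),
        max_eq_right (by linarith), min_eq_right (by linarith)]] <;>
    nlinarith [sq_nonneg (a - c - b + d), sq_nonneg (a - b), sq_nonneg (c - d),
      mul_nonneg (sub_nonneg.mpr h1) (sub_nonneg.mpr h2),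
      sq_nonneg (a - c + b - d), mul_self_nonneg ((a-b)+(d-c))]

lemma key3 {a b x y : ℝ} (hyx : y ≤ x) :
    (a - max a ((a + b) / 2)) ^ 2 + (b - min b ((a + b) / 2)) ^ 2 ≤
      (a - x) ^ 2 + (b - y) ^ 2 := by
  rcases le_total b a with h1 | h1
  · rw [max_eq_left (by linarith), min_eq_left (by linarith)]
    simp; positivity
  · rw [max_eq_right (by linarith), min_eq_right (by linarith)]
    nlinarith [sq_nonneg (x - a - (b - y)),
      mul_nonneg (sub_nonneg.mpr hyx) (by linarith : (0:ℝ) ≤ 2 * (b - a) + (x - y))]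

lemma key4 {a b x y : ℝ} (hyx : y ≤ x)
    (heq : (a - x) ^ 2 + (b - y) ^ 2 =
      (a - max a ((a + b) / 2)) ^ 2 + (b - min b ((a + b) / 2)) ^ 2) :
    x = max a ((a + b) / 2) ∧ y = min b ((a + b) / 2) := by
  rcases le_total b a with h1 | h1
  · rw [max_eq_left (by linarith), min_eq_left (by linarith)] at heq ⊢
    have hx : (a - x) ^ 2 = 0 :=
      le_antisymm (by nlinarith [sq_nonneg (b - y)]) (sq_nonneg _)
    have hy : (b - y) ^ 2 = 0 :=
      le_antisymm (by nlinarith [sq_nonneg (a - x)]) (sq_nonneg _)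
    constructor
    · nlinarith [sq_eq_zero_iff.mp hx]
    · nlinarith [sq_eq_zero_iff.mp hy]
  · rw [max_eq_right (by linarith), min_eq_right (by linarith)] at heq ⊢
    have heq' : (a - x) ^ 2 + (b - y) ^ 2 = (b - a) ^ 2 / 2 := by
      rw [heq]; ring
    have sum0 : (x - a - b + y) ^ 2 + (x - y) * (2 * (b - a) + (x - y)) = 0 := by
      linear_combination 2 * heq'
    have t2 : 0 ≤ (x - y) * (2 * (b - a) + (x - y)) :=
      mul_nonneg (by linarith) (by linarith)
    have e1 : (x - a - b + y) ^ 2 = 0 :=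
      le_antisymm (by linarith) (sq_nonneg _)
    have e2 : (x - y) * (2 * (b - a) + (x - y)) = 0 := by
      linarith [sq_nonneg (x - a - b + y)]
    have h1' : x - a - b + y = 0 := sq_eq_zero_iff.mp e1
    have h2' : x - y = 0 := by
      rcases mul_eq_zero.mp e2 with h | h
      · linarith
      · linarith
    constructor <;> linarith

lemma dsq_psi_le {v w : V} (hvw : v ≠ w) (f g : V →₀ ℝ) :
    dsq (psi v w f) (psi v w g) ≤ dsq f g := by
  classical
  set S := ((f - g).support ∪ (psi v w f - psi v w g).support) ∪ {v, w} with hS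
  set s' := S \ {v, w} with hs'
  have hv : v ∉ s' := by simp [hs']
  have hw : w ∉ s' := by simp [hs']
  have hins : insert v (insert w s') = S := by
    ext u
    by_cases h1 : u = v <;> by_cases h2 : u = w <;>
      simp [hs', hS, h1, h2]
  have hsub1 : (f - g).support ⊆ insert v (insert w s') := by
    rw [hins]; exact (Finset.subset_union_left).trans Finset.subset_union_left
  have hsub2 : (psi v w f - psi v w g).support ⊆ insert v (insert w s') := by
    rw [hins]; exact (Finset.subset_union_right).trans Finset.subset_union_left
  rw [dsq_eq f g hvw hv hw hsub1, dsq_eq _ _ hvw hv hw hsub2]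
  have hsum : ∑ u ∈ s', (psi v w f u - psi v w g u) ^ 2 = ∑ u ∈ s', (f u - g u) ^ 2 := by
    refine Finset.sum_congr rfl fun u hu => ?_
    rw [hs', Finset.mem_sdiff] at hu
    have h1 : u ≠ v := fun h => hu.2 (by simp [h])
    have h2 : u ≠ w := fun h => hu.2 (by simp [h])
    rw [psi_apply_ne h1 h2, psi_apply_ne h1 h2]
  rw [hsum, psi_apply_v hvw, psi_apply_v hvw, psi_apply_w, psi_apply_w]
  have := key2 (f v) (f w) (g v) (g w)
  linarith

lemma psi_support_subset {v w : V} (hvw : v ≠ w) (f : V →₀ ℝ)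
    (hf : ∀ u, 0 ≤ f u) (σ τ : Finset V) (hsupp : f.support ⊆ σ)
    (hστ : σ ⊆ τ) (hvτ : w ∈ σ → v ∈ τ) : (psi v w f).support ⊆ τ := by
  intro u hu
  rw [Finsupp.mem_support_iff] at hu
  by_cases huv : u = v
  · subst huv
    rw [psi_apply_v hvw] at hu
    by_cases hfv : f u = 0
    · rw [hfv] at hu
      have hfw : f w ≠ 0 := by
        intro h0; rw [h0] at hu; simp at hu
      exact hvτ (hsupp (Finsupp.mem_support_iff.mpr hfw))
    · exact hστ (hsupp (Finsupp.mem_support_iff.mpr hfv))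
  · by_cases huw : u = w
    · subst huw
      rw [psi_apply_w] at hu
      have hfw : f u ≠ 0 := by
        intro h0
        rw [h0] at hu
        have : min 0 ((f v + 0) / 2) = 0 := min_eq_left (by linarith [hf v])
        exact hu this
      exact hστ (hsupp (Finsupp.mem_support_iff.mpr hfw))
    · rw [psi_apply_ne huv huw] at hu
      exact hστ (hsupp (Finsupp.mem_support_iff.mpr hu))

lemma psi_bounds {v w : V} (hvw : v ≠ w) (f : V →₀ ℝ)
    (hf : ∀ u, 0 ≤ f u ∧ f u ≤ 1) (u : V) : 0 ≤ psi v w f u ∧ psi v w f u ≤ 1 := by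
  by_cases huv : u = v
  · subst huv
    rw [psi_apply_v hvw]
    obtain ⟨h1, h2⟩ := hf u; obtain ⟨h3, h4⟩ := hf w
    exact ⟨le_max_of_le_left h1, max_le h2 (by linarith)⟩
  · by_cases huw : u = w
    · subst huw
      rw [psi_apply_w]
      obtain ⟨h1, h2⟩ := hf u; obtain ⟨h3, h4⟩ := hf v
      exact ⟨le_min h1 (by linarith), min_le_of_left_le h2⟩
    · rw [psi_apply_ne huv huw]; exact hf u

end Aux

/-- Let `K` be a finite-dimensional abstract simplicial complex with a
compatible partial order on its vertices and let `v < w` be vertices.  Then `ψ_{vw}` maps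
`CC(K)` into `CC(K)`; it is the nearest-point projection of the ambient Euclidean space
onto the half-space `{t_v ≥ t_w}`; and it restricts to a non-expanding (for the intrinsic
metric) retraction of `CC(K)` onto `CC(K) ∩ {t_v ≥ t_w}`. -/
theorem stmt17 {V : Type*} [DecidableEq V] [PartialOrder V] (K : ASC V)
    (hfd : ∃ n : ℕ, ∀ σ ∈ K.faces, σ.card ≤ n)
    (hcompat : ∀ σ ∈ K.faces, ∃ τ ∈ K.faces, ∀ x : V, x ∈ τ ↔ ∃ y ∈ σ, x ≤ y)
    (v w : V) (hvw : v < w) :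
    -- ψ maps the cubical cone into itself
    Set.MapsTo (psi v w) (CC K) (CC K) ∧
    -- ψ is the nearest-point projection onto the half-space {t_v ≥ t_w}:
    (∀ f : V →₀ ℝ, psi v w f ∈ halfSpace v w) ∧
    (∀ f : V →₀ ℝ, ∀ g ∈ halfSpace v w, dsq f (psi v w f) ≤ dsq f g) ∧
    (∀ f : V →₀ ℝ, ∀ g ∈ halfSpace v w, dsq f g = dsq f (psi v w f) → g = psi v w f) ∧
    -- ψ is a retraction: it fixes CC(K) ∩ {t_v ≥ t_w} pointwise
    (∀ f ∈ CC K ∩ halfSpace v w, psi v w f = f) ∧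
    -- ψ is non-expanding for the intrinsic metric of CC(K)
    (∀ x ∈ CC K, ∀ y ∈ CC K, intrDist K (psi v w x) (psi v w y) ≤ intrDist K x y) := by
  have hne : v ≠ w := ne_of_lt hvw
  -- MapsTo
  have hmaps : Set.MapsTo (psi v w) (CC K) (CC K) := by
    rintro f ⟨σ, hσ, hsupp, hb⟩
    obtain ⟨τ, hτ, hτmem⟩ := hcompat σ hσ
    have hστ : σ ⊆ τ := fun x hx => (hτmem x).mpr ⟨x, hx, le_refl x⟩
    have hvτ : w ∈ σ → v ∈ τ := fun hw => (hτmem v).mpr ⟨w, hw, le_of_lt hvw⟩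
    exact ⟨τ, hτ, psi_support_subset hne f (fun u => (hb u).1) σ τ hsupp hστ hvτ,
      psi_bounds hne f hb⟩
  refine ⟨hmaps, ?_, ?_, ?_, ?_, ?_⟩
  · -- half-space
    intro f
    show psi v w f w ≤ psi v w f v
    rw [psi_apply_v hne, psi_apply_w]
    exact le_trans (min_le_right _ _) (le_max_right _ _)
  · -- nearest point: inequality
    intro f g hg
    classical
    set s' := ((f - g).support ∪ (f - psi v w f).support) \ {v, w} with hs'
    have hv : v ∉ s' := by simp [hs']
    have hw : w ∉ s' := by simp [hs']
    have hsub1 : (f - g).support ⊆ insert v (insert w s') := by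
      intro u hu
      by_cases h1 : u = v
      · simp [h1]
      · by_cases h2 : u = w
        · simp [h2]
        · simp [hs', h1, h2, hu]
    have hsub2 : (f - psi v w f).support ⊆ insert v (insert w s') := by
      intro u hu
      by_cases h1 : u = v
      · simp [h1]
      · by_cases h2 : u = w
        · simp [h2]
        · simp [hs', h1, h2, hu]
    rw [dsq_eq f g hne hv hw hsub1, dsq_eq f (psi v w f) hne hv hw hsub2]
    have hsum : ∑ u ∈ s', (f u - psi v w f u) ^ 2 = 0 := by
      refine Finset.sum_eq_zero fun u hu => ?_
      rw [hs', Finset.mem_sdiff] at hu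
      have h1 : u ≠ v := fun h => hu.2 (by simp [h])
      have h2 : u ≠ w := fun h => hu.2 (by simp [h])
      rw [psi_apply_ne h1 h2]; ring
    rw [hsum, psi_apply_v hne, psi_apply_w]
    have hk := key3 (a := f v) (b := f w) hg
    have hpos : (0:ℝ) ≤ ∑ u ∈ s', (f u - g u) ^ 2 :=
      Finset.sum_nonneg fun u _ => sq_nonneg _
    linarith
  · -- nearest point: uniqueness
    intro f g hg heq
    classical
    set s' := ((f - g).support ∪ (f - psi v w f).support) \ {v, w} with hs'
    have hv : v ∉ s' := by simp [hs']
    have hw : w ∉ s' := by simp [hs']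
    have hsub1 : (f - g).support ⊆ insert v (insert w s') := by
      intro u hu
      by_cases h1 : u = v
      · simp [h1]
      · by_cases h2 : u = w
        · simp [h2]
        · simp [hs', h1, h2, hu]
    have hsub2 : (f - psi v w f).support ⊆ insert v (insert w s') := by
      intro u hu
      by_cases h1 : u = v
      · simp [h1]
      · by_cases h2 : u = w
        · simp [h2]
        · simp [hs', h1, h2, hu]
    rw [dsq_eq f g hne hv hw hsub1, dsq_eq f (psi v w f) hne hv hw hsub2] at heq
    have hsum0 : ∑ u ∈ s', (f u - psi v w f u) ^ 2 = 0 := by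
      refine Finset.sum_eq_zero fun u hu => ?_
      rw [hs', Finset.mem_sdiff] at hu
      have h1 : u ≠ v := fun h => hu.2 (by simp [h])
      have h2 : u ≠ w := fun h => hu.2 (by simp [h])
      rw [psi_apply_ne h1 h2]; ring
    rw [hsum0, psi_apply_v hne, psi_apply_w] at heq
    have hk := key3 (a := f v) (b := f w) hg
    have hpos : (0:ℝ) ≤ ∑ u ∈ s', (f u - g u) ^ 2 :=
      Finset.sum_nonneg fun u _ => sq_nonneg _
    have hsum_zero : ∑ u ∈ s', (f u - g u) ^ 2 = 0 := by linarith
    have heq2 : (f v - g v) ^ 2 + (f w - g w) ^ 2 =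
        (f v - max (f v) ((f v + f w) / 2)) ^ 2 +
          (f w - min (f w) ((f v + f w) / 2)) ^ 2 := by linarith
    obtain ⟨hxv, hxw⟩ := key4 (a := f v) (b := f w) hg heq2
    have hterm : ∀ u ∈ s', g u = f u := by
      intro u hu
      have := (Finset.sum_eq_zero_iff_of_nonneg fun u _ => sq_nonneg (f u - g u)).mp
        hsum_zero u hu
      have h0 : f u - g u = 0 := by
        have := sq_eq_zero_iff.mp this
        exact this
      linarith
    ext u
    by_cases h1 : u = v
    · subst h1; rw [psi_apply_v hne]; exact hxv
    · by_cases h2 : u = w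
      · subst h2; rw [psi_apply_w]; exact hxw
      · rw [psi_apply_ne h1 h2]
        by_cases hmem : u ∈ s'
        · exact hterm u hmem
        · by_cases hmem2 : u ∈ (f - g).support
          · exact absurd (hsub1 hmem2) (by simp [h1, h2, hmem])
          · have : (f - g) u = 0 := Finsupp.notMem_support_iff.mp hmem2
            rw [Finsupp.sub_apply] at this
            linarith
  · -- retraction
    rintro f ⟨hfCC, hfH⟩
    have hfH' : f w ≤ f v := hfH
    rw [psi, max_eq_left (by linarith), min_eq_left (by linarith),
      Finsupp.update_self, Finsupp.update_self]
  · -- non-expanding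
    intro x hx y hy
    classical
    set R : (V →₀ ℝ) → (V →₀ ℝ) → Prop := fun f g => ∃ σ ∈ K.faces, f.support ⊆ σ ∧
      g.support ⊆ σ ∧ (∀ u : V, 0 ≤ f u ∧ f u ≤ 1) ∧ (∀ u : V, 0 ≤ g u ∧ g u ≤ 1)
      with hR
    have hRpsi : ∀ f g, R f g → R (psi v w f) (psi v w g) := by
      rintro f g ⟨σ, hσ, hf, hg, hfb, hgb⟩
      obtain ⟨τ, hτ, hτmem⟩ := hcompat σ hσ
      have hστ : σ ⊆ τ := fun u hu => (hτmem u).mpr ⟨u, hu, le_refl u⟩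
      have hvτ : w ∈ σ → v ∈ τ := fun hw => (hτmem v).mpr ⟨w, hw, le_of_lt hvw⟩
      exact ⟨τ, hτ, psi_support_subset hne f (fun u => (hfb u).1) σ τ hf hστ hvτ,
        psi_support_subset hne g (fun u => (hgb u).1) σ τ hg hστ hvτ,
        psi_bounds hne f hfb, psi_bounds hne g hgb⟩
    have hRself : ∀ f ∈ CC K, R f (psi v w f) := by
      rintro f ⟨σ, hσ, hf, hfb⟩
      obtain ⟨τ, hτ, hτmem⟩ := hcompat σ hσ
      have hστ : σ ⊆ τ := fun u hu => (hτmem u).mpr ⟨u, hu, le_refl u⟩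
      have hvτ : w ∈ σ → v ∈ τ := fun hw => (hτmem v).mpr ⟨w, hw, le_of_lt hvw⟩
      exact ⟨τ, hτ, hf.trans hστ,
        psi_support_subset hne f (fun u => (hfb u).1) σ τ hf hστ hvτ,
        hfb, psi_bounds hne f hfb⟩
    set Sxy := {L | ∃ p : List (V →₀ ℝ), p ≠ [] ∧ p.head? = some x ∧ p.getLast? = some y ∧
      (∀ f ∈ p, f ∈ CC K) ∧ List.Chain' R p ∧
      L = ((p.zip p.tail).map fun q => eudist q.1 q.2).sum} with hSxy
    set S' := {L | ∃ p : List (V →₀ ℝ), p ≠ [] ∧ p.head? = some (psi v w x) ∧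
      p.getLast? = some (psi v w y) ∧
      (∀ f ∈ p, f ∈ CC K) ∧ List.Chain' R p ∧
      L = ((p.zip p.tail).map fun q => eudist q.1 q.2).sum} with hS'
    show sInf S' ≤ sInf Sxy
    have hbdd : BddBelow S' := by
      refine ⟨0, fun L hL => ?_⟩
      obtain ⟨p, _, _, _, _, _, hLeq⟩ := hL
      rw [hLeq]
      exact List.sum_nonneg (by
        intro a ha
        obtain ⟨q, _, rfl⟩ := List.mem_map.mp ha
        exact Real.sqrt_nonneg _)
    by_cases hcase : Sxy.Nonempty
    · refine le_csInf hcase fun L hL => ?_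
      obtain ⟨p, hp0, hh, hl, hcc, hch, hLeq⟩ := hL
      set q := p.map (psi v w) with hq
      have hmem : ((q.zip q.tail).map fun r => eudist r.1 r.2).sum ∈ S' := by
        refine ⟨q, by simpa [hq] using hp0, ?_, ?_, ?_, ?_, rfl⟩
        · rw [hq, List.head?_map, hh]; rfl
        · rw [hq, List.getLast?_map, hl]; rfl
        · intro f hf
          rw [hq] at hf
          obtain ⟨g, hg, rfl⟩ := List.mem_map.mp hf
          exact hmaps (hcc g hg)
        · rw [hq]; show List.IsChain _ _; rw [List.isChain_map]
          exact hch.imp fun f g h => hRpsi f g h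
      refine le_trans (csInf_le hbdd hmem) ?_
      -- length comparison
      rw [hLeq, hq]
      have htail : (p.map (psi v w)).tail = p.tail.map (psi v w) := by
        cases p <;> simp
      rw [htail, List.zip_map, List.map_map]
      refine List.sum_le_sum fun r _ => ?_
      show eudist (psi v w r.1) (psi v w r.2) ≤ eudist r.1 r.2
      exact Real.sqrt_le_sqrt (dsq_psi_le hne r.1 r.2)
    · -- Sxy is empty: both infima are 0
      have hSxy_empty : Sxy = ∅ := Set.not_nonempty_iff_eq_empty.mp hcase
      have hS'_empty : S' = ∅ := by
        rw [Set.eq_empty_iff_forall_notMem]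
        intro L hL
        obtain ⟨p, hp0, hh, hl, hcc, hch, hLeq⟩ := hL
        -- build a chain from x to y
        have hyCC := hy
        have hxpsi : R x (psi v w x) := hRself x hx
        have hypsi : R (psi v w y) y := by
          obtain ⟨σ, hσ, h1, h2, h3, h4⟩ := hRself y hy
          exact ⟨σ, hσ, h2, h1, h4, h3⟩
        have hchain : ((x :: p) ++ [y]).Chain' R := by
          show List.IsChain R _; rw [List.isChain_append]
          refine ⟨?_, List.isChain_singleton y, ?_⟩
          · rw [List.isChain_cons]
            refine ⟨fun h hh' => ?_, hch⟩
            rw [hh] at hh'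
            cases hh'
            exact hxpsi
          · intro a ha b hb
            simp only [List.head?, Option.mem_def, Option.some.injEq] at hb
            subst hb
            rw [List.getLast?_cons, hl] at ha
            · cases ha; exact hypsi
        have : (((((x :: p) ++ [y]).zip ((x :: p) ++ [y]).tail).map
            fun q => eudist q.1 q.2).sum) ∈ Sxy := by
          refine ⟨(x :: p) ++ [y], by simp, ?_, ?_, ?_, hchain, rfl⟩
          · simp
          · rw [List.getLast?_concat]
          · intro f hf
            simp only [List.mem_append, List.mem_cons, List.not_mem_nil, or_false] at hf
            rcases hf with (rfl | hf) | rfl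
            · exact hx
            · exact hcc f hf
            · exact hy
        rw [hSxy_empty] at this
        exact this
      rw [hSxy_empty, hS'_empty]
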